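/- arXiv:2211.11091 — 5 statements merged into one kernel-verified Lean document; each statement's English description precedes it below -/
import Mathlib

section
/- Let G ≤ S_n be a permutation group acting naturally on V = k^n, where char(k) = 0 or char(k) > n. Then the lead term ideal Lead(I(G,V^m)) (with respect to the lexicographic order with x_1^{(1)} > x_1^{(2)} > … > x_1^{(m)} > x_2^{(1)} > … > x_n^{(m)}) contains every monomial of the form ∏_{j=1}^m (x_i^{(j)})^{k_j} with 1 ≤ i ≤ n and k_1 + ⋯ + k_m = i. -/
open MvPolynomial

/-- The leading monomial (exponent vector) of a polynomial with respect to the lexicographic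
order where variables with smaller index in `σ` are larger (junk value `0` for `f = 0`). -/
noncomputable def leadM {k : Type*} [CommSemiring k] {σ : Type*}
    [LinearOrder σ] (f : MvPolynomial σ k) : Lex (σ →₀ ℕ) :=
  letI : DecidableEq (Lex (σ →₀ ℕ)) := Classical.decEq _
  WithBot.unbotD (toLex 0) ((f.support.image (toLex : (σ →₀ ℕ) → Lex (σ →₀ ℕ))).max)

/-- The lead term ideal of an ideal `I`: the ideal generated by the leading monomials of
all nonzero elements of `I`. -/
noncomputable def leadIdeal {k : Type*} [CommSemiring k] {σ : Type*} [LinearOrder σ]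
    (I : Ideal (MvPolynomial σ k)) : Ideal (MvPolynomial σ k) :=
  Ideal.span {p | ∃ f ∈ I, f ≠ 0 ∧ p = monomial (ofLex (leadM f)) (1 : k)}

section Aux
open Finset Nat MvPolynomial


lemma multinomial_zero' {m : ℕ} : Nat.multinomial (univ : Finset (Fin m)) (0 : Fin m →₀ ℕ) = 1 := by
  have h := Nat.multinomial_spec (univ : Finset (Fin m)) (0 : Fin m →₀ ℕ)
  simpa using h

lemma multinomial_pascal {m : ℕ} (ν : Fin m →₀ ℕ) (hν : ν ≠ 0) :
    Nat.multinomial Finset.univ ν =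
      ∑ j ∈ ν.support, Nat.multinomial Finset.univ ⇑(ν - Finsupp.single j 1 : Fin m →₀ ℕ) := by
  classical
  set N := ∑ j : Fin m, ν j with hN
  have hNpos : 0 < N := by
    rcases Finsupp.ne_iff.1 hν with ⟨j, hj⟩
    simp only [Finsupp.coe_zero, Pi.zero_apply] at hj
    exact lt_of_lt_of_le (Nat.pos_of_ne_zero hj)
      (Finset.single_le_sum (f := fun j => ν j) (fun _ _ => Nat.zero_le _) (mem_univ j))
  set P := ∏ i : Fin m, (ν i)! with hP
  have hPpos : 0 < P := Finset.prod_pos fun _ _ => Nat.factorial_pos _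
  have key : ∀ j ∈ ν.support,
      P * Nat.multinomial Finset.univ ⇑(ν - Finsupp.single j 1 : Fin m →₀ ℕ) = ν j * (N - 1)! := by
    intro j hj
    set ν' : Fin m →₀ ℕ := ν - Finsupp.single j 1 with hν'
    have hj1 : 1 ≤ ν j := Nat.one_le_iff_ne_zero.2 (Finsupp.mem_support_iff.1 hj)
    have happ : ∀ i, ν' i = if i = j then ν j - 1 else ν i := by
      intro i; rw [hν', Finsupp.tsub_apply, Finsupp.single_apply]
      rcases eq_or_ne i j with rfl | h
      · simp
      · simp [h, Ne.symm h]
    have hprod : P = ν j * ∏ i : Fin m, (ν' i)! := by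
      rw [hP, ← Finset.mul_prod_erase univ _ (mem_univ j),
          ← Finset.mul_prod_erase univ (fun i => (ν' i)!) (mem_univ j),
          happ j, if_pos rfl, ← mul_assoc, Nat.mul_factorial_pred (Nat.one_le_iff_ne_zero.1 hj1)]
      congr 1
      apply Finset.prod_congr rfl
      intro i hi
      rw [happ i, if_neg (Finset.mem_erase.1 hi).1]
    have hsum : (∑ i : Fin m, ν' i) = N - 1 := by
      have h1 : (∑ i : Fin m, ν' i) = (ν j - 1) + ∑ i ∈ univ.erase j, ν i := by
        rw [← Finset.add_sum_erase univ _ (mem_univ j), happ j, if_pos rfl]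
        congr 1
        exact Finset.sum_congr rfl fun i hi => by rw [happ i, if_neg (Finset.mem_erase.1 hi).1]
      have h2 : N = ν j + ∑ i ∈ univ.erase j, ν i := by
        rw [hN, ← Finset.add_sum_erase univ _ (mem_univ j)]
      omega
    have spec := Nat.multinomial_spec (univ : Finset (Fin m)) ⇑ν'
    rw [hsum] at spec
    rw [hprod, mul_assoc, spec]
  have total : P * ∑ j ∈ ν.support, Nat.multinomial Finset.univ ⇑(ν - Finsupp.single j 1 : Fin m →₀ ℕ)
      = P * Nat.multinomial Finset.univ ⇑ν := by
    rw [Finset.mul_sum, Finset.sum_congr rfl key, ← Finset.sum_mul]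
    have hsupp : ∑ j ∈ ν.support, ν j = N := by
      rw [hN]
      exact Finset.sum_subset (Finset.subset_univ _)
        (fun x _ hx => Finsupp.notMem_support_iff.1 hx)
    rw [hsupp, Nat.multinomial_spec, ← hN, Nat.mul_factorial_pred hNpos.ne']
  exact (Nat.eq_of_mul_eq_mul_left hPpos total).symm


variable {k : Type} [Field k] {n m : ℕ}

/-- Embedding of copy indices into the variable set, for a fixed row `l`. -/
def emb (n m : ℕ) (l : Fin n) : Fin m ↪ Lex (Fin n × Fin m) :=
  ⟨fun j => toLex (l, j), fun a b h => by
    have := congrArg (fun p => (ofLex p).2) h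
    simpa using this⟩

/-- The exponent vector putting multidegree `ν` in row `l`. -/
noncomputable def rowE (l : Fin n) (ν : Fin m →₀ ℕ) : (Lex (Fin n × Fin m)) →₀ ℕ :=
  Finsupp.embDomain (emb n m l) ν

lemma rowE_apply (l l' : Fin n) (j : Fin m) (ν : Fin m →₀ ℕ) :
    rowE l ν (toLex (l', j)) = if l' = l then ν j else 0 := by
  rcases eq_or_ne l' l with rfl | h
  · rw [if_pos rfl, rowE]
    exact Finsupp.embDomain_apply_self _ _ _
  · rw [if_neg h, rowE]
    apply Finsupp.embDomain_notin_range
    rintro ⟨j', hj'⟩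
    have := congrArg (fun p => (ofLex p).1) hj'
    simp [emb] at this
    exact h this.symm

@[simp] lemma rowE_zero (l : Fin n) : rowE l (0 : Fin m →₀ ℕ) = 0 := by
  simp [rowE]

lemma rowE_add (l : Fin n) (a b : Fin m →₀ ℕ) : rowE l (a + b) = rowE l a + rowE l b := by
  simp [rowE, Finsupp.embDomain_add]

lemma rowE_eq_zero_iff (l : Fin n) (ν : Fin m →₀ ℕ) : rowE l ν = 0 ↔ ν = 0 := by
  constructor
  · intro h
    have := Finsupp.embDomain_injective (emb n m l) (M := ℕ)
    apply this
    simpa [rowE] using h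
  · rintro rfl; simp

lemma rowE_single (l : Fin n) (j : Fin m) (c : ℕ) :
    rowE l (Finsupp.single j c) = Finsupp.single (toLex (l, j)) c := by
  rw [rowE, Finsupp.embDomain_single]
  rfl

lemma monomial_rowE (l : Fin n) (ν : Fin m →₀ ℕ) :
    (monomial (rowE l ν) (1:k) : MvPolynomial (Lex (Fin n × Fin m)) k)
      = ∏ j : Fin m, X (toLex (l, j)) ^ ν j := by
  rw [monomial_eq, C_1, one_mul, rowE, Finsupp.prod_embDomain]
  exact Finsupp.prod_fintype _ _ (fun _ => pow_zero _)

/-- The generic linear form of row `l`, as a multivariate power series in `t₁,…,t_m`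
over the polynomial ring. -/
noncomputable def Lrow (k : Type) [Field k] {n : ℕ} (m : ℕ) (l : Fin n) :
    MvPowerSeries (Fin m) (MvPolynomial (Lex (Fin n × Fin m)) k) :=
  ∑ j : Fin m, MvPowerSeries.monomial (Finsupp.single j 1) (X (toLex (l, j)))

/-- The geometric series `(1 - Lrow l)⁻¹`, given by explicit coefficients. -/
noncomputable def Grow (k : Type) [Field k] {n : ℕ} (m : ℕ) (l : Fin n) :
    MvPowerSeries (Fin m) (MvPolynomial (Lex (Fin n × Fin m)) k) :=
  fun ν => (Nat.multinomial Finset.univ ν : MvPolynomial (Lex (Fin n × Fin m)) k)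
    * monomial (rowE l ν) 1

lemma coeff_Grow (l : Fin n) (ν : Fin m →₀ ℕ) :
    MvPowerSeries.coeff ν (Grow k m l)
      = (Nat.multinomial Finset.univ ν : MvPolynomial (Lex (Fin n × Fin m)) k)
        * monomial (rowE l ν) 1 := rfl

lemma multinomial_zero'' {m : ℕ} : Nat.multinomial (univ : Finset (Fin m)) (0 : Fin m → ℕ) = 1 := by
  have h := Nat.multinomial_spec (univ : Finset (Fin m)) (0 : Fin m → ℕ)
  simpa using h

lemma one_sub_Lrow_mul_Grow (l : Fin n) : (1 - Lrow k m l) * Grow k m l = 1 := by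
  classical
  apply MvPowerSeries.ext
  intro ν
  rw [sub_mul, one_mul, map_sub, MvPowerSeries.coeff_one]
  have hL : MvPowerSeries.coeff ν (Lrow k m l * Grow k m l)
      = ∑ j : Fin m, if Finsupp.single j 1 ≤ ν then
          X (toLex (l, j)) * MvPowerSeries.coeff (ν - Finsupp.single j 1) (Grow k m l) else 0 := by
    rw [Lrow, Finset.sum_mul, map_sum]
    exact Finset.sum_congr rfl fun j _ => by rw [MvPowerSeries.coeff_monomial_mul]
  rcases eq_or_ne ν 0 with rfl | hν
  · rw [if_pos rfl, hL]
    have : ∀ j : Fin m, ¬ (Finsupp.single j 1 ≤ (0 : Fin m →₀ ℕ)) := by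
      intro j h
      simpa using Finsupp.single_le_iff.1 h
    simp only [this, if_false, Finset.sum_const_zero, sub_zero, coeff_Grow]
    rw [rowE_zero]
    simp [multinomial_zero'']
  · rw [if_neg hν, hL]
    have hterm : ∀ j : Fin m,
        (if Finsupp.single j 1 ≤ ν then
          X (toLex (l, j)) * MvPowerSeries.coeff (ν - Finsupp.single j 1) (Grow k m l) else 0)
        = (if j ∈ ν.support then
            ((Nat.multinomial Finset.univ ⇑(ν - Finsupp.single j 1 : Fin m →₀ ℕ) : ℕ) :
              MvPolynomial (Lex (Fin n × Fin m)) k) * monomial (rowE l ν) 1 else 0) := by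
      intro j
      have hiff : Finsupp.single j 1 ≤ ν ↔ j ∈ ν.support := by
        rw [Finsupp.single_le_iff, Finsupp.mem_support_iff]
        exact ⟨fun h => Nat.one_le_iff_ne_zero.1 h, fun h => Nat.one_le_iff_ne_zero.2 h⟩
      by_cases hj : j ∈ ν.support
      · rw [if_pos (hiff.2 hj), if_pos hj, coeff_Grow]
        have hX : (X (toLex (l, j)) : MvPolynomial (Lex (Fin n × Fin m)) k)
            = monomial (Finsupp.single (toLex (l, j)) 1) 1 := rfl
        rw [hX, mul_left_comm, monomial_mul, mul_one]
        congr 2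
        rw [← rowE_single l j 1, ← rowE_add, add_tsub_cancel_of_le (hiff.2 hj)]
      · rw [if_neg (fun h => hj (hiff.1 h)), if_neg hj]
    rw [Finset.sum_congr rfl (fun j _ => hterm j), Finset.sum_ite_mem, Finset.univ_inter,
      ← Finset.sum_mul, coeff_Grow, ← Nat.cast_sum]
    rw [← multinomial_pascal ν hν, sub_self]

/-- The full generating series `∏_{l} (1 - Lrow l)⁻¹`; its coefficients are the polarized
complete homogeneous symmetric functions. -/
noncomputable def Hser (k : Type) [Field k] (n m : ℕ) :
    MvPowerSeries (Fin m) (MvPolynomial (Lex (Fin n × Fin m)) k) :=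
  ∏ l : Fin n, Grow k m l

/-- The series `∏_{l ≥ i} (1 - Lrow l)⁻¹`. -/
noncomputable def Pser (k : Type) [Field k] {n : ℕ} (m : ℕ) (i : Fin n) :
    MvPowerSeries (Fin m) (MvPolynomial (Lex (Fin n × Fin m)) k) :=
  ∏ l ∈ univ.filter (fun l => i ≤ l), Grow k m l

/-- The polynomial factor `∏_{l < i} (1 - Lrow l)`. -/
noncomputable def Qser (k : Type) [Field k] {n : ℕ} (m : ℕ) (i : Fin n) :
    MvPowerSeries (Fin m) (MvPolynomial (Lex (Fin n × Fin m)) k) :=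
  ∏ l ∈ univ.filter (fun l => l < i), (1 - Lrow k m l)

lemma Qser_mul_Hser (i : Fin n) : Qser k m i * Hser k n m = Pser k m i := by
  have hsplit : Hser k n m
      = (∏ l ∈ univ.filter (fun l => l < i), Grow k m l) * Pser k m i := by
    rw [Hser, Pser]
    have := Finset.prod_filter_mul_prod_filter_not univ (fun l => l < i) (Grow k m)
    rw [← this]
    congr 1
    apply Finset.prod_congr _ (fun _ _ => rfl)
    apply Finset.filter_congr
    intro l _
    simp [not_lt]
  rw [hsplit, Qser, ← mul_assoc, ← Finset.prod_mul_distrib]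
  rw [Finset.prod_congr rfl (fun l _ => one_sub_Lrow_mul_Grow l), Finset.prod_const_one, one_mul]

lemma map_rename_Grow (e : Equiv.Perm (Fin n)) (l : Fin n) :
    MvPowerSeries.map
      (rename (fun p : Lex (Fin n × Fin m) => toLex (e (ofLex p).1, (ofLex p).2))
        : MvPolynomial (Lex (Fin n × Fin m)) k →ₐ[k] _).toRingHom (Grow k m l)
      = Grow k m (e l) := by
  apply MvPowerSeries.ext
  intro ν
  rw [MvPowerSeries.coeff_map, coeff_Grow, coeff_Grow]
  rw [map_mul, map_natCast]
  congr 1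
  show rename _ (monomial (rowE l ν) 1) = monomial (rowE (e l) ν) 1
  rw [rename_monomial]
  congr 1
  rw [rowE, rowE, Finsupp.embDomain_eq_mapDomain, Finsupp.embDomain_eq_mapDomain,
    ← Finsupp.mapDomain_comp]
  rfl

lemma map_rename_Hser (e : Equiv.Perm (Fin n)) :
    MvPowerSeries.map
      (rename (fun p : Lex (Fin n × Fin m) => toLex (e (ofLex p).1, (ofLex p).2))
        : MvPolynomial (Lex (Fin n × Fin m)) k →ₐ[k] _).toRingHom (Hser k n m)
      = Hser k n m := by
  rw [Hser, map_prod]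
  rw [Finset.prod_congr rfl (fun l _ => map_rename_Grow e l)]
  exact Equiv.prod_comp e (Grow k m)

lemma coeff_Hser_invariant (e : Equiv.Perm (Fin n)) (b : Fin m →₀ ℕ) :
    rename (fun p : Lex (Fin n × Fin m) => toLex (e (ofLex p).1, (ofLex p).2))
      (MvPowerSeries.coeff b (Hser k n m)) = MvPowerSeries.coeff b (Hser k n m) := by
  have h := MvPowerSeries.coeff_map (σ := Fin m)
    (f := (rename (fun p : Lex (Fin n × Fin m) => toLex (e (ofLex p).1, (ofLex p).2))
      : MvPolynomial (Lex (Fin n × Fin m)) k →ₐ[k] _).toRingHom) b (Hser k n m)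
  rw [map_rename_Hser e] at h
  exact h.symm

lemma constantCoeff_coeff_Hser (b : Fin m →₀ ℕ) (hb : b ≠ 0) :
    constantCoeff (MvPowerSeries.coeff b (Hser k n m)) = 0 := by
  have hmap : MvPowerSeries.map
      (constantCoeff : MvPolynomial (Lex (Fin n × Fin m)) k →+* k) (Hser k n m) = 1 := by
    rw [Hser, map_prod]
    have hone : ∀ l : Fin n, MvPowerSeries.map
        (constantCoeff : MvPolynomial (Lex (Fin n × Fin m)) k →+* k) (Grow k m l) = 1 := by
      intro l
      apply MvPowerSeries.ext
      intro ν
      rw [MvPowerSeries.coeff_map, coeff_Grow, MvPowerSeries.coeff_one, map_mul, map_natCast,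
        constantCoeff_monomial]
      rcases eq_or_ne ν 0 with rfl | hν
      · rw [rowE_zero, if_pos rfl, if_pos rfl, mul_one]
        simp [multinomial_zero'']
      · rw [if_neg (fun h => hν ((rowE_eq_zero_iff l ν).1 h)), if_neg hν, mul_zero]
    rw [Finset.prod_congr rfl (fun l _ => hone l), Finset.prod_const_one]
  have h2 := MvPowerSeries.coeff_map (σ := Fin m)
    (f := (constantCoeff : MvPolynomial (Lex (Fin n × Fin m)) k →+* k)) b (Hser k n m)
  rw [hmap, MvPowerSeries.coeff_one, if_neg hb] at h2
  exact h2.symm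

lemma coeff_one_sub_Lrow (l : Fin n) (d : Fin m →₀ ℕ) (hd : 2 ≤ ∑ j, d j) :
    MvPowerSeries.coeff d (1 - Lrow k m l) = 0 := by
  classical
  have hd0 : d ≠ 0 := by
    intro h; rw [h] at hd; simp at hd
  rw [map_sub, MvPowerSeries.coeff_one, Lrow, map_sum, if_neg hd0, zero_sub, neg_eq_zero]
  apply Finset.sum_eq_zero
  intro j _
  rw [MvPowerSeries.coeff_monomial, if_neg]
  intro h
  rw [h] at hd
  simp [Finsupp.single_apply] at hd

lemma coeff_Qser_eq_zero (i : Fin n) (κ' : Fin m →₀ ℕ) (hdeg : ∑ j, κ' j = i.1 + 1) :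
    MvPowerSeries.coeff κ' (Qser k m i) = 0 := by
  classical
  rw [Qser, MvPowerSeries.coeff_prod]
  apply Finset.sum_eq_zero
  intro μ hμ
  rw [mem_finsuppAntidiag] at hμ
  obtain ⟨hsum, _⟩ := hμ
  by_contra hne
  have hfac : ∀ l ∈ univ.filter (fun l : Fin n => l < i), ∑ j, (μ l) j ≤ 1 := by
    intro l hl
    by_contra h2
    exact hne (Finset.prod_eq_zero hl (coeff_one_sub_Lrow l (μ l) (by omega)))
  have hle : i.1 + 1 ≤ (univ.filter (fun l : Fin n => l < i)).card := by
    calc i.1 + 1 = ∑ j, κ' j := hdeg.symm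
      _ = ∑ j, ∑ l ∈ univ.filter (fun l : Fin n => l < i), (μ l) j := by
          apply Finset.sum_congr rfl
          intro j _
          rw [← hsum, Finsupp.finset_sum_apply]
      _ = ∑ l ∈ univ.filter (fun l : Fin n => l < i), ∑ j, (μ l) j := Finset.sum_comm
      _ ≤ ∑ _l ∈ univ.filter (fun l : Fin n => l < i), 1 := Finset.sum_le_sum hfac
      _ = (univ.filter (fun l : Fin n => l < i)).card := by simp
  have hcard : (univ.filter (fun l : Fin n => l < i)).card = i.1 := by
    have h : univ.filter (fun l : Fin n => l < i) = Finset.Iio i := by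
      ext l; simp
    rw [h, Fin.card_Iio]
  omega

lemma coeff_Pser_mem (Gp : Subgroup (Equiv.Perm (Fin n))) (i : Fin n) (κ' : Fin m →₀ ℕ)
    (hdeg : ∑ j, κ' j = i.1 + 1) :
    MvPowerSeries.coeff κ' (Pser k m i) ∈
      Ideal.span {h : MvPolynomial (Lex (Fin n × Fin m)) k |
        (∀ g ∈ Gp, rename
          (fun p : Lex (Fin n × Fin m) => toLex (g⁻¹ (ofLex p).1, (ofLex p).2)) h = h) ∧
        constantCoeff h = 0} := by
  classical
  rw [← Qser_mul_Hser i, MvPowerSeries.coeff_mul]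
  apply Ideal.sum_mem
  rintro ⟨a, b⟩ hab
  rw [Finset.HasAntidiagonal.mem_antidiagonal] at hab
  rcases eq_or_ne b 0 with rfl | hb
  · rw [add_zero] at hab
    subst hab
    rw [coeff_Qser_eq_zero i a hdeg, zero_mul]
    exact Ideal.zero_mem _
  · exact Ideal.mul_mem_left _ _ (Ideal.subset_span
      ⟨fun g _ => coeff_Hser_invariant g⁻¹ b, constantCoeff_coeff_Hser b hb⟩)

lemma prod_monomial_one {ι : Type*} (S : Finset ι) (E : ι → (Lex (Fin n × Fin m) →₀ ℕ)) :
    (∏ l ∈ S, (monomial (E l) (1:k))) = monomial (∑ l ∈ S, E l) 1 := by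
  classical
  induction S using Finset.cons_induction with
  | empty => simp
  | cons a S ha ih => rw [Finset.prod_cons, Finset.sum_cons, ih, monomial_mul, mul_one]

lemma coeff_Pser_eq (i : Fin n) (κ' : Fin m →₀ ℕ) :
    MvPowerSeries.coeff κ' (Pser k m i) =
      ∑ μ ∈ finsuppAntidiag (univ.filter (fun l : Fin n => i ≤ l)) κ',
        monomial (∑ l ∈ univ.filter (fun l : Fin n => i ≤ l), rowE l (μ l))
          (((∏ l ∈ univ.filter (fun l : Fin n => i ≤ l),
              Nat.multinomial Finset.univ (μ l) : ℕ)) : k) := by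
  classical
  rw [Pser, MvPowerSeries.coeff_prod]
  apply Finset.sum_congr rfl
  intro μ _
  rw [Finset.prod_congr rfl (fun l _ => coeff_Grow l (μ l)), Finset.prod_mul_distrib,
    prod_monomial_one, ← Nat.cast_prod, ← MvPolynomial.C_eq_coe_nat, C_mul_monomial, mul_one]

lemma sum_rowE_apply (S : Finset (Fin n)) (μ : Fin n →₀ (Fin m →₀ ℕ)) (l : Fin n) (j : Fin m) :
    (∑ l' ∈ S, rowE l' (μ l')) (toLex (l, j)) = if l ∈ S then (μ l) j else 0 := by
  classical
  rw [Finsupp.finset_sum_apply]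
  rw [Finset.sum_congr rfl (fun l' _ => rowE_apply l' l j (μ l'))]
  exact Finset.sum_ite_eq S l (fun l' => (μ l') j)

lemma toLex_le_target (i : Fin n) (κ' : Fin m →₀ ℕ)
    (μ : Fin n →₀ (Fin m →₀ ℕ))
    (hμ : μ ∈ finsuppAntidiag (univ.filter (fun l : Fin n => i ≤ l)) κ') :
    toLex (∑ l ∈ univ.filter (fun l : Fin n => i ≤ l), rowE l (μ l)) ≤ toLex (rowE i κ') := by
  classical
  rw [mem_finsuppAntidiag] at hμ
  obtain ⟨hsum, hsupp⟩ := hμ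
  set S := univ.filter (fun l : Fin n => i ≤ l) with hS
  have hiS : i ∈ S := by simp [hS]
  have happ : ∀ j : Fin m, κ' j = ∑ l ∈ S, (μ l) j := by
    intro j
    rw [← hsum, Finsupp.finset_sum_apply]
  by_contra hlt'
  have hlt : toLex (rowE i κ') < toLex (∑ l ∈ S, rowE l (μ l)) := lt_of_not_ge hlt'
  obtain ⟨q, hq1, hq2⟩ := Finsupp.lex_def.1 hlt
  simp only [ofLex_toLex] at hq1 hq2
  set l : Fin n := (ofLex q).1 with hl
  set j : Fin m := (ofLex q).2 with hj
  have hqe : q = toLex (l, j) := rfl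
  rw [hqe, sum_rowE_apply, rowE_apply] at hq2
  rcases lt_trichotomy l i with hli | hli | hli
  · have hlS : l ∉ S := by simp [hS, not_le.2 hli]
    rw [if_neg hlS] at hq2
    exact Nat.not_lt_zero _ hq2
  · subst hli
    rw [if_pos rfl, if_pos hiS] at hq2
    have : (μ l) j ≤ κ' j := by
      rw [happ j]
      exact Finset.single_le_sum (f := fun l' => (μ l') j) (fun _ _ => Nat.zero_le _) hiS
    omega
  · have hlS : l ∈ S := by simp [hS, le_of_lt hli]
    have hlne : l ≠ i := ne_of_gt hli
    rw [if_neg hlne, if_pos hlS] at hq2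
    have hrow_i : ∀ j' : Fin m, κ' j' = (μ i) j' := by
      intro j'
      have hlt2 : toLex ((i, j') : Fin n × Fin m) < q := by
        rw [hqe]
        exact Prod.Lex.lt_iff.2 (Or.inl hli)
      have h3 := hq1 _ hlt2
      rw [sum_rowE_apply, rowE_apply, if_pos rfl, if_pos hiS] at h3
      exact h3
    have h4 : (μ i) j + (μ l) j ≤ ∑ l' ∈ S, (μ l') j := by
      rw [← Finset.add_sum_erase S _ hiS]
      have : (μ l) j ≤ ∑ l' ∈ S.erase i, (μ l') j :=
        Finset.single_le_sum (f := fun l' => (μ l') j) (fun _ _ => Nat.zero_le _)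
          (Finset.mem_erase.2 ⟨hlne, hlS⟩)
      omega
    have h5 := happ j
    have h6 := hrow_i j
    omega

lemma max_unbot'_eq {α : Type*} [LinearOrder α] (s : Finset α) (a c : α) (ha : a ∈ s)
    (hb : ∀ b ∈ s, b ≤ a) : WithBot.unbotD c s.max = a := by
  have h : s.max = (a : WithBot α) :=
    le_antisymm (Finset.max_le (fun b hb' => WithBot.coe_le_coe.2 (hb b hb'))) (Finset.le_max ha)
  rw [h]
  rfl

lemma coeff_tau (i : Fin n) (κ' : Fin m →₀ ℕ) :
    MvPolynomial.coeff (rowE i κ') (MvPowerSeries.coeff κ' (Pser k m i))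
      = ((Nat.multinomial Finset.univ κ' : ℕ) : k) := by
  classical
  rw [coeff_Pser_eq, MvPolynomial.coeff_sum]
  set S := univ.filter (fun l : Fin n => i ≤ l) with hS
  have hiS : i ∈ S := by simp [hS]
  set μstar : Fin n →₀ (Fin m →₀ ℕ) := Finsupp.single i κ' with hμstar
  have hμapp : ∀ l, μstar l = if i = l then κ' else 0 := fun l => Finsupp.single_apply
  have hmem : μstar ∈ finsuppAntidiag S κ' := by
    rw [mem_finsuppAntidiag]
    constructor
    · rw [Finset.sum_congr rfl (fun l _ => hμapp l), Finset.sum_ite_eq S i (fun _ => κ'),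
        if_pos hiS]
    · exact Finsupp.support_single_subset.trans (by simpa using hiS)
  have hEstar : (∑ l ∈ S, rowE l (μstar l)) = rowE i κ' := by
    have : ∀ l ∈ S, rowE l (μstar l) = if i = l then rowE i κ' else 0 := by
      intro l _
      rw [hμapp l]
      rcases eq_or_ne i l with rfl | hne
      · rw [if_pos rfl, if_pos rfl]
      · rw [if_neg hne, if_neg hne, rowE_zero]
    rw [Finset.sum_congr rfl this, Finset.sum_ite_eq S i (fun _ => rowE i κ'), if_pos hiS]
  have huniq : ∀ μ ∈ finsuppAntidiag S κ',
      (∑ l ∈ S, rowE l (μ l)) = rowE i κ' → μ = μstar := by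
    intro μ hμ hE
    rw [mem_finsuppAntidiag] at hμ
    obtain ⟨hsum, hsupp⟩ := hμ
    ext l j
    have h1 := congrArg (fun F => F (toLex (l, j))) hE
    beta_reduce at h1
    rw [sum_rowE_apply, rowE_apply] at h1
    by_cases hlS : l ∈ S
    · rw [if_pos hlS] at h1
      rw [h1, hμapp l]
      rcases eq_or_ne i l with rfl | hne
      · simp
      · simp [hne, Ne.symm hne]
    · have hz : μ l = 0 := Finsupp.notMem_support_iff.1 (fun h => hlS (hsupp h))
      have hzstar : μstar l = 0 := by
        rw [hμapp l, if_neg]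
        intro h; exact hlS (h ▸ hiS)
      rw [hz, hzstar]
  rw [Finset.sum_eq_single_of_mem μstar hmem]
  · rw [hEstar, MvPolynomial.coeff_monomial, if_pos rfl]
    congr 1
    rw [Finset.prod_eq_single_of_mem i hiS]
    · rw [hμapp i, if_pos rfl]
    · intro l _ hne
      rw [hμapp l, if_neg (Ne.symm hne)]
      simpa using multinomial_zero''
  · intro μ hμ hne
    rw [MvPolynomial.coeff_monomial, if_neg]
    intro hE
    exact hne (huniq μ hμ hE)

lemma multinomial_cast_ne_zero (hchar : ringChar k = 0 ∨ n < ringChar k) (i : Fin n)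
    (κ' : Fin m →₀ ℕ) (hdeg : ∑ j, κ' j = i.1 + 1) :
    ((Nat.multinomial Finset.univ κ' : ℕ) : k) ≠ 0 := by
  have hpos : 0 < Nat.multinomial Finset.univ ⇑κ' := Nat.multinomial_pos _ _
  rcases hchar with h0 | hlt
  · haveI : CharP k 0 := h0 ▸ ringChar.charP k
    haveI : CharZero k := CharP.charP_to_charZero k
    exact_mod_cast hpos.ne'
  · intro h
    haveI : CharP k (ringChar k) := ringChar.charP k
    have hp : (ringChar k).Prime := by
      rcases CharP.char_is_prime_or_zero k (ringChar k) with hp | hz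
      · exact hp
      · omega
    have hdvd : ringChar k ∣ Nat.multinomial Finset.univ ⇑κ' :=
      (CharP.cast_eq_zero_iff k (ringChar k) _).1 h
    have hdvd2 : ringChar k ∣ (i.1 + 1)! := by
      refine hdvd.trans ⟨∏ j, (κ' j)!, ?_⟩
      rw [← hdeg, mul_comm]
      exact (Nat.multinomial_spec _ _).symm
    have hle := (Nat.Prime.dvd_factorial hp).1 hdvd2
    have := i.isLt
    omega

lemma leadM_eq_of {σ' : Type*} [LinearOrder σ'] (f : MvPolynomial σ' k) (τ : σ' →₀ ℕ)
    (hmem : MvPolynomial.coeff τ f ≠ 0)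
    (hb : ∀ d ∈ f.support, toLex d ≤ toLex τ) : leadM f = toLex τ := by
  letI : DecidableEq (Lex (σ' →₀ ℕ)) := Classical.decEq _
  unfold leadM
  apply max_unbot'_eq
  · exact Finset.mem_image_of_mem _ (MvPolynomial.mem_support_iff.2 hmem)
  · intro b hbmem
    obtain ⟨d, hd, rfl⟩ := Finset.mem_image.1 hbmem
    exact hb d hd

end Aux

/-- for a permutation group `G ≤ Sₙ` acting naturally on `V = kⁿ` and
diagonally on `Vᵐ`, with `char k = 0` or `char k > n`, the lead term ideal of the Hilbert
ideal `I(G,Vᵐ)` — with respect to the lex order with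
`x₁^{(1)} > x₁^{(2)} > ⋯ > x₁^{(m)} > x₂^{(1)} > ⋯ > xₙ^{(m)}` — contains every monomial
`∏_j (x_i^{(j)})^{κ_j}` with `κ₁ + ⋯ + κ_m = i` (here `i : Fin n` encodes the `1`-based
index `i+1`). -/
theorem monomials_mem_leadIdeal_hilbert (k : Type) [Field k] (n m : ℕ)
    (hchar : ringChar k = 0 ∨ n < ringChar k)
    (G : Subgroup (Equiv.Perm (Fin n)))
    (i : Fin n) (κ : Fin m → ℕ) (hκ : ∑ j : Fin m, κ j = (i : ℕ) + 1) :
    (∏ j : Fin m, X (toLex ((i, j) : Fin n × Fin m)) ^ κ j :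
        MvPolynomial (Lex (Fin n × Fin m)) k) ∈
      leadIdeal (Ideal.span {h : MvPolynomial (Lex (Fin n × Fin m)) k |
        (∀ g ∈ G, rename
          (fun p : Lex (Fin n × Fin m) => toLex (g⁻¹ (ofLex p).1, (ofLex p).2)) h = h) ∧
        constantCoeff h = 0}) := by
  classical
  have hiS : i ∈ Finset.univ.filter (fun l : Fin n => i ≤ l) := by simp
  set κ' : Fin m →₀ ℕ := Finsupp.equivFunOnFinite.symm κ with hκ'
  have hκ'app : ∀ j, κ' j = κ j := fun j => rfl
  have hdeg : ∑ j, κ' j = i.1 + 1 := by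
    rw [← hκ]
    exact Finset.sum_congr rfl fun j _ => hκ'app j
  set τ : Lex (Fin n × Fin m) →₀ ℕ := rowE i κ' with hτ
  set f := MvPowerSeries.coeff κ' (Pser k m i) with hf
  have hne : MvPolynomial.coeff τ f ≠ 0 := by
    rw [hf, hτ, coeff_tau i κ']
    exact multinomial_cast_ne_zero hchar i κ' hdeg
  have hf0 : f ≠ 0 := fun h => hne (by rw [h]; simp)
  have hlead : leadM f = toLex τ := by
    apply leadM_eq_of f τ hne
    intro d hd
    rw [hf, coeff_Pser_eq] at hd
    have hd' := MvPolynomial.support_sum hd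
    obtain ⟨μ, hμ, hdmem⟩ := Finset.mem_biUnion.1 hd'
    have : d = ∑ l ∈ Finset.univ.filter (fun l : Fin n => i ≤ l), rowE l (μ l) := by
      have := MvPolynomial.support_monomial_subset hdmem
      simpa using this
    rw [this, hτ]
    exact toLex_le_target i κ' μ hμ
  have hmono : (∏ j : Fin m, X (toLex ((i, j) : Fin n × Fin m)) ^ κ j :
        MvPolynomial (Lex (Fin n × Fin m)) k) = monomial τ (1 : k) := by
    rw [hτ, monomial_rowE]
    exact Finset.prod_congr rfl fun j _ => by rw [hκ'app j]
  rw [hmono]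
  apply Ideal.subset_span
  refine ⟨f, coeff_Pser_mem G i κ' hdeg, hf0, ?_⟩
  rw [hlead, ofLex_toLex]
end

section
/- Let G be a finite group acting linearly and degree-preservingly on a polynomial ring k[W] over a field k with |G| invertible in k. If the Hilbert ideal I(G,W) is generated by G-invariant homogeneous polynomials f_1,…,f_s of degree at most d, then the invariant ring k[W]^G is generated as a k-algebra by its homogeneous elements of degree at most d, i.e., β(G,W) ≤ d. -/
open MvPolynomial

/-- let a finite group `G` act linearly (each `g` sends every variable to a
homogeneous polynomial of degree `1`) by `k`-algebra automorphisms on a polynomial ring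
`k[W]`, with `|G|` invertible in `k`. If the Hilbert ideal `I(G,W)` (the ideal generated by
the invariants with zero constant term) is generated by `G`-invariant homogeneous
polynomials `f₁,…,f_s` of degree at most `d`, then every invariant lies in the `k`-algebra
generated by the invariant homogeneous elements of degree at most `d`, i.e. `β(G,W) ≤ d`. -/
theorem beta_le_of_hilbert_ideal_generators (k : Type) [Field k] (σ : Type) [Fintype σ]
    (G : Type) [Group G] [Fintype G]
    (ρ : G →* (MvPolynomial σ k ≃ₐ[k] MvPolynomial σ k))
    (hlin : ∀ (g : G) (i : σ), (ρ g (X i)).IsHomogeneous 1)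
    (hcard : IsUnit ((Fintype.card G : k)))
    (d s : ℕ) (f : Fin s → MvPolynomial σ k)
    (hfinv : ∀ (i : Fin s) (g : G), ρ g (f i) = f i)
    (hfhom : ∀ i : Fin s, ∃ e ≤ d, (f i).IsHomogeneous e)
    (hspan : Ideal.span (Set.range f) =
      Ideal.span {h : MvPolynomial σ k | (∀ g : G, ρ g h = h) ∧ constantCoeff h = 0}) :
    ∀ h : MvPolynomial σ k, (∀ g : G, ρ g h = h) →
      h ∈ Algebra.adjoin k {p : MvPolynomial σ k |
        (∀ g : G, ρ g p = p) ∧ ∃ e ≤ d, p.IsHomogeneous e} := by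
  set A := Algebra.adjoin k {p : MvPolynomial σ k |
      (∀ g : G, ρ g p = p) ∧ ∃ e ≤ d, p.IsHomogeneous e} with hA
  -- each ρ g preserves homogeneity
  have hrhom : ∀ (g : G) (p : MvPolynomial σ k) (n : ℕ), p.IsHomogeneous n →
      (ρ g p).IsHomogeneous n := by
    intro g p n hp
    have h1 : (ρ g).toAlgHom = aeval ((ρ g).toAlgHom ∘ X) := aeval_unique _
    have h2 : ρ g p = aeval (fun i => ρ g (X i)) p := by
      conv_lhs => rw [show (ρ g p) = (ρ g).toAlgHom p from rfl, h1]
      rfl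
    rw [h2]
    simpa using hp.aeval (fun i => ρ g (X i)) (fun i => hlin g i)
  -- ρ g commutes with homogeneousComponent
  have hcomm : ∀ (g : G) (n : ℕ) (p : MvPolynomial σ k),
      ρ g (homogeneousComponent n p) = homogeneousComponent n (ρ g p) := by
    intro g n p
    have h1 : homogeneousComponent n (ρ g p) = ∑ i ∈ Finset.range (p.totalDegree + 1),
        if n = i then ρ g (homogeneousComponent i p) else 0 := by
      conv_lhs => rw [← sum_homogeneousComponent p]
      rw [map_sum, map_sum]
      exact Finset.sum_congr rfl fun i _ => homogeneousComponent_of_mem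
        ((mem_homogeneousSubmodule _ _).mpr
          (hrhom g _ i (homogeneousComponent_isHomogeneous i p)))
    rw [h1, Finset.sum_ite_eq (Finset.range (p.totalDegree + 1)) n
      (fun i => ρ g (homogeneousComponent i p))]
    split
    · rfl
    · next hn =>
      rw [homogeneousComponent_eq_zero, map_zero]
      simp only [Finset.mem_range, Nat.lt_succ_iff, not_le] at hn
      exact hn
  -- the span is contained in the kernel of constantCoeff
  have hker : ∀ q ∈ Ideal.span (Set.range f),
      constantCoeff q = 0 := by
    intro q hq
    rw [hspan] at hq
    have : Ideal.span {h : MvPolynomial σ k | (∀ g : G, ρ g h = h) ∧ constantCoeff h = 0} ≤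
        RingHom.ker (constantCoeff : MvPolynomial σ k →+* k) :=
      Ideal.span_le.mpr fun x hx => hx.2
    exact this hq
  -- homogeneous invariants are in A, by strong induction on degree
  have key : ∀ e : ℕ, ∀ p : MvPolynomial σ k, p.IsHomogeneous e → (∀ g : G, ρ g p = p) →
      p ∈ A := by
    intro e
    induction e using Nat.strong_induction_on with
    | _ e IH =>
      intro p hp hpinv
      rcases Nat.eq_zero_or_pos e with he | he
      · subst he
        have : p = C (coeff 0 p) := by
          rw [← homogeneousComponent_zero, homogeneousComponent_of_mem
            ((mem_homogeneousSubmodule _ _).mpr hp), if_pos rfl]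
        rw [this]
        exact Subalgebra.algebraMap_mem A _
      · -- positive degree: p is in the Hilbert ideal
        have hpc : constantCoeff p = 0 := by
          by_contra hcne
          have := hp (show coeff 0 p ≠ 0 from hcne)
          simp at this
          omega
        have hpmem : p ∈ Ideal.span (Set.range f) := by
          rw [hspan]
          exact Ideal.subset_span ⟨hpinv, hpc⟩
        obtain ⟨c, hc⟩ := Ideal.mem_span_range_iff_exists_fun.mp hpmem
        set u := hcard.unit with hu
        have huval : ((u : kˣ) : k) = (Fintype.card G : k) := IsUnit.unit_spec hcard
        have hcardsmul : p = ((u⁻¹ : kˣ) : k) • ∑ g : G, ρ g p := by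
          have h2 : ∑ g : G, ρ g p = (Fintype.card G : k) • p := by
            simp [hpinv, ← Nat.cast_smul_eq_nsmul k]
          rw [h2, smul_smul, ← huval, Units.inv_mul, one_smul]
        have hT : ∑ g : G, ρ g p = ∑ i : Fin s, (∑ g : G, ρ g (c i)) * f i := by
          calc ∑ g : G, ρ g p = ∑ g : G, ∑ i : Fin s, ρ g (c i) * f i := by
                refine Finset.sum_congr rfl fun g _ => ?_
                rw [← hc, map_sum]
                exact Finset.sum_congr rfl fun i _ => by rw [map_mul, hfinv]
            _ = ∑ i : Fin s, (∑ g : G, ρ g (c i)) * f i := by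
                rw [Finset.sum_comm]
                exact Finset.sum_congr rfl fun i _ => (Finset.sum_mul _ _ _).symm
        have hpe : homogeneousComponent e p = p := by
          rw [homogeneousComponent_of_mem ((mem_homogeneousSubmodule _ _).mpr hp), if_pos rfl]
        have hfinal : p = ((u⁻¹ : kˣ) : k) • ∑ i : Fin s,
            homogeneousComponent e ((∑ g : G, ρ g (c i)) * f i) := by
          conv_lhs => rw [← hpe, hcardsmul, hT, map_smul, map_sum]
        rw [hfinal]
        refine Subalgebra.smul_mem A (Subalgebra.sum_mem A fun i _ => ?_) _
        obtain ⟨ei, hei, hfi⟩ := hfhom i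
        -- the transfer of c i is invariant
        have hTinv : ∀ h0 : G, ρ h0 (∑ g : G, ρ g (c i)) = ∑ g : G, ρ g (c i) := by
          intro h0
          rw [map_sum]
          exact Fintype.sum_equiv (Equiv.mulLeft h0) _ _
            (fun g => by rw [show (Equiv.mulLeft h0) g = h0 * g from rfl, map_mul]; rfl)
        rcases Nat.eq_zero_or_pos ei with hei0 | hei0
        · -- f i is a homogeneous constant with zero constant term, hence 0
          have hfc : f i = 0 := by
            have h1 : f i = C (coeff 0 (f i)) := by
              rw [← homogeneousComponent_zero, homogeneousComponent_of_mem
                ((mem_homogeneousSubmodule _ _).mpr (hei0 ▸ hfi)), if_pos rfl]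
            have h2 : constantCoeff (f i) = 0 := hker _ (Ideal.subset_span ⟨i, rfl⟩)
            rw [h1, show coeff 0 (f i) = constantCoeff (f i) from rfl, h2, map_zero]
          simpa [hfc] using zero_mem A
        · -- decompose the transfer into homogeneous components
          have hdec : homogeneousComponent e ((∑ g : G, ρ g (c i)) * f i) =
              ∑ j ∈ Finset.range ((∑ g : G, ρ g (c i)).totalDegree + 1),
                homogeneousComponent e (homogeneousComponent j (∑ g : G, ρ g (c i)) * f i) := by
            conv_lhs => rw [← sum_homogeneousComponent (∑ g : G, ρ g (c i)),
              Finset.sum_mul, map_sum]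
          rw [hdec]
          refine Subalgebra.sum_mem A fun j _ => ?_
          rw [homogeneousComponent_of_mem ((mem_homogeneousSubmodule _ _).mpr
            ((homogeneousComponent_isHomogeneous j _).mul hfi))]
          split
          · next hje =>
            refine mul_mem (IH j (by omega) _ (homogeneousComponent_isHomogeneous j _)
              (fun g => by rw [hcomm, hTinv])) ?_
            exact Algebra.subset_adjoin ⟨hfinv i, ei, hei, hfi⟩
          · exact zero_mem A
  intro h hinv
  rw [← sum_homogeneousComponent h]
  exact Subalgebra.sum_mem A fun i _ => key i _ (homogeneousComponent_isHomogeneous i h)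
    (fun g => by rw [hcomm, hinv])
end

section
/- Let G be a finite group acting linearly on finite-dimensional k-vector spaces, acting diagonally on V^m, and let f ∈ I(G,V) be an element of the Hilbert ideal. Then every polarization Pol_k(f), for k ∈ ℕ^m, lies in the Hilbert ideal I(G,V^m). -/
open MvPolynomial

/-- The polarization `Pol_κ(f)`: the coefficient of `t₁^{κ₁} ⋯ t_m^{κ_m}` in `Φ(f)` where
`Φ : k[x₁,…,xₙ] → k[x_i^{(j)}][t₁,…,t_m]` is the algebra map sending `x_i ↦ Σ_j x_i^{(j)} t_j`.
The variables `x_i^{(j)}` are indexed by `emb i j : σ`. -/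
noncomputable def Pol {k : Type*} [CommSemiring k] {n m : ℕ} {σ : Type*}
    (emb : Fin n → Fin m → σ) (f : MvPolynomial (Fin n) k) (κ : Fin m → ℕ) :
    MvPolynomial σ k :=
  MvPolynomial.coeff (Finsupp.equivFunOnFinite.symm κ)
    (MvPolynomial.aeval
      (fun i => ∑ j : Fin m, (MvPolynomial.C (MvPolynomial.X (emb i j)) * MvPolynomial.X j :
        MvPolynomial (Fin m) (MvPolynomial σ k))) f)

/-- The action of `g ∈ G` (acting on `V = kⁿ` through a representation
`ρ : G →* GLₙ(k)`) on `k[V] = k[x₁,…,xₙ]`: `(g·f)(v) = f(g⁻¹ v)`, i.e.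
`x_i ↦ Σ_l (ρ(g⁻¹))_{i l} x_l`. -/
noncomputable def actV {k : Type*} [CommRing k] {n : ℕ} {G : Type*} [Group G]
    (ρ : G →* Matrix.GeneralLinearGroup (Fin n) k) (g : G)
    (f : MvPolynomial (Fin n) k) : MvPolynomial (Fin n) k :=
  MvPolynomial.aeval
    (fun i => ∑ l : Fin n, MvPolynomial.C ((ρ g⁻¹ : Matrix (Fin n) (Fin n) k) i l) *
      MvPolynomial.X l) f

/-- The diagonal action of `g ∈ G` on `k[Vᵐ] = k[x_i^{(j)}]`:
`x_i^{(j)} ↦ Σ_l (ρ(g⁻¹))_{i l} x_l^{(j)}`. -/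
noncomputable def actVm {k : Type*} [CommRing k] {n m : ℕ} {G : Type*} [Group G]
    (ρ : G →* Matrix.GeneralLinearGroup (Fin n) k) (g : G)
    (f : MvPolynomial (Fin n × Fin m) k) : MvPolynomial (Fin n × Fin m) k :=
  MvPolynomial.aeval
    (fun p : Fin n × Fin m =>
      ∑ l : Fin n, MvPolynomial.C ((ρ g⁻¹ : Matrix (Fin n) (Fin n) k) p.1 l) *
        MvPolynomial.X ((l, p.2) : Fin n × Fin m)) f


section Aux

variable {k : Type} [Field k] {n m : ℕ} {G : Type} [Group G]

/-- The polarization algebra map `Φ`. -/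
noncomputable def PhiAux (k : Type) [Field k] (n m : ℕ) :
    MvPolynomial (Fin n) k →ₐ[k] MvPolynomial (Fin m) (MvPolynomial (Fin n × Fin m) k) :=
  aeval (fun i => ∑ j : Fin m, C (X (i, j)) * X j)

lemma Pol_eq (f : MvPolynomial (Fin n) k) (κ : Fin m → ℕ) :
    Pol (fun i j => (i, j) : Fin n → Fin m → Fin n × Fin m) f κ =
      coeff (Finsupp.equivFunOnFinite.symm κ) (PhiAux k n m f) := rfl

/-- The diagonal action as an algebra hom. -/
noncomputable def AgAux (ρ : G →* Matrix.GeneralLinearGroup (Fin n) k) (m : ℕ) (g : G) :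
    MvPolynomial (Fin n × Fin m) k →ₐ[k] MvPolynomial (Fin n × Fin m) k :=
  aeval (fun p : Fin n × Fin m =>
    ∑ l : Fin n, C ((ρ g⁻¹ : Matrix (Fin n) (Fin n) k) p.1 l) * X ((l, p.2) : Fin n × Fin m))

lemma actVm_eq (ρ : G →* Matrix.GeneralLinearGroup (Fin n) k) (g : G)
    (f : MvPolynomial (Fin n × Fin m) k) : actVm ρ g f = AgAux ρ m g f := rfl

lemma Phi_actV (ρ : G →* Matrix.GeneralLinearGroup (Fin n) k) (g : G)
    (f : MvPolynomial (Fin n) k) :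
    PhiAux k n m (actV ρ g f) =
      MvPolynomial.map ((AgAux ρ m g : MvPolynomial (Fin n × Fin m) k →ₐ[k] _) :
        MvPolynomial (Fin n × Fin m) k →+* MvPolynomial (Fin n × Fin m) k)
        (PhiAux k n m f) := by
  have h : ((MvPolynomial.map ((AgAux ρ m g : MvPolynomial (Fin n × Fin m) k →ₐ[k] _) :
        MvPolynomial (Fin n × Fin m) k →+* MvPolynomial (Fin n × Fin m) k)).comp
          (PhiAux k n m).toRingHom) =
      (PhiAux k n m).toRingHom.comp
        (aeval (fun i => ∑ l : Fin n,
          C ((ρ g⁻¹ : Matrix (Fin n) (Fin n) k) i l) * X l) :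
            MvPolynomial (Fin n) k →ₐ[k] MvPolynomial (Fin n) k).toRingHom := by
    apply ringHom_ext
    · intro r
      simp [PhiAux, AgAux, algebraMap_eq]
    · intro i
      simp only [RingHom.coe_comp, Function.comp_apply, AlgHom.toRingHom_eq_coe,
        RingHom.coe_coe, aeval_X, PhiAux, AgAux, map_sum, map_mul, MvPolynomial.map_C,
        MvPolynomial.map_X, aeval_C, algebraMap_eq, Finset.sum_mul, Finset.mul_sum, C_mul]
      rw [Finset.sum_comm]
      apply Finset.sum_congr rfl
      intro j _
      apply Finset.sum_congr rfl
      intro l _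
      rw [MvPolynomial.algebraMap_apply, algebraMap_eq]
      ring
  exact (RingHom.congr_fun h f).symm

lemma constCoeff_Phi (f : MvPolynomial (Fin n) k) :
    MvPolynomial.map (constantCoeff (σ := Fin n × Fin m) (R := k)) (PhiAux k n m f) =
      C (constantCoeff f) := by
  have h : (MvPolynomial.map (constantCoeff (σ := Fin n × Fin m) (R := k))).comp
        (PhiAux k n m).toRingHom =
      (C : k →+* MvPolynomial (Fin m) k).comp constantCoeff := by
    apply ringHom_ext
    · intro r
      simp [PhiAux, algebraMap_eq]
    · intro i
      simp [PhiAux]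
  exact RingHom.congr_fun h f

end Aux

/-- for a finite group `G` acting linearly on `V = kⁿ` and diagonally on
`Vᵐ`, every polarization `Pol_κ(f)` of an element `f` of the Hilbert ideal `I(G,V)` lies
in the Hilbert ideal `I(G,Vᵐ)` (the Hilbert ideal is the ideal generated by the invariants
with zero constant term). -/
theorem pol_mem_hilbert_ideal (k : Type) [Field k] (n m : ℕ)
    (G : Type) [Group G] [Finite G] (ρ : G →* Matrix.GeneralLinearGroup (Fin n) k)
    (f : MvPolynomial (Fin n) k)
    (hf : f ∈ Ideal.span {h : MvPolynomial (Fin n) k |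
      (∀ g : G, actV ρ g h = h) ∧ constantCoeff h = 0})
    (κ : Fin m → ℕ) :
    Pol (fun i j => (i, j) : Fin n → Fin m → Fin n × Fin m) f κ ∈
      Ideal.span {h : MvPolynomial (Fin n × Fin m) k |
        (∀ g : G, actVm ρ g h = h) ∧ constantCoeff h = 0} := by
  set J := Ideal.span {h : MvPolynomial (Fin n × Fin m) k |
        (∀ g : G, actVm ρ g h = h) ∧ constantCoeff h = 0} with hJ
  have key : ∀ (κ' : Fin m →₀ ℕ), coeff κ' (PhiAux k n m f) ∈ J := by
    intro κ'
    induction hf using Submodule.span_induction generalizing κ' with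
    | mem h hmem =>
      apply Ideal.subset_span
      obtain ⟨hinv, hcc⟩ := hmem
      constructor
      · intro g
        rw [actVm_eq]
        rw [show (AgAux ρ m g) (coeff κ' (PhiAux k n m h)) =
          ((AgAux ρ m g : MvPolynomial (Fin n × Fin m) k →ₐ[k] _) :
            MvPolynomial (Fin n × Fin m) k →+* MvPolynomial (Fin n × Fin m) k)
              (coeff κ' (PhiAux k n m h)) from rfl]
        rw [← coeff_map, ← Phi_actV, hinv g]
      · rw [show constantCoeff (coeff κ' (PhiAux k n m h)) =
          (constantCoeff : MvPolynomial (Fin n × Fin m) k →+* k)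
            (coeff κ' (PhiAux k n m h)) from rfl]
        rw [← coeff_map, constCoeff_Phi, hcc, map_zero, coeff_zero]
    | zero => simp
    | add x y hx hy ihx ihy =>
      rw [map_add, coeff_add]
      exact J.add_mem (ihx κ') (ihy κ')
    | smul r x hx ihx =>
      rw [smul_eq_mul, map_mul, coeff_mul]
      apply Ideal.sum_mem
      intro c _
      exact J.mul_mem_left _ (ihx c.2)
  have := key (Finsupp.equivFunOnFinite.symm κ)
  rwa [Pol_eq]
end

section
/- Assume char(k) = 0. Let M = x_1^{a_1}⋯x_n^{a_n} be a monomial in k[x_1,…,x_n] and k = (k_1,…,k_m) ∈ ℕ^m with Pol_k(M) ≠ 0. Write the leading monomial of Pol_k(M) (lexicographic order with x_1^{(1)} > x_1^{(2)} > … > x_1^{(m)} > x_2^{(1)} > … > x_n^{(m)}) as h = ∏_{1≤i≤n, 1≤j≤m} (x_i^{(j)})^{b_{i,j}}. Then the exponents satisfy the recursion b_{i,j} = min{ k_j − Σ_{l=1}^{i−1} b_{l,j}, a_i − Σ_{l=1}^{j−1} b_{i,l} } for all 1 ≤ i ≤ n and 1 ≤ j ≤ m. -/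
open MvPolynomial

open Finset

lemma monomial_symm_eq {R σ : Type*} [CommSemiring R] [Fintype σ] (g : σ → ℕ) :
    (monomial (Finsupp.equivFunOnFinite.symm g) (1:R) : MvPolynomial σ R) = ∏ j, X j ^ g j := by
  rw [monomial_eq, map_one, one_mul, Finsupp.prod_pow]
  simp

lemma term_eq (k : Type) [Field k] (n m : ℕ) (B : Fin n → Fin m → ℕ) :
    (∏ i : Fin n, ((Nat.multinomial univ (B i) : MvPolynomial (Fin m) (MvPolynomial (Lex (Fin n × Fin m)) k)) *
          ∏ j : Fin m, (MvPolynomial.C (MvPolynomial.X (toLex (i, j))) * MvPolynomial.X j) ^ (B i j)))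
    = C ((∏ i, Nat.multinomial univ (B i) : MvPolynomial (Lex (Fin n × Fin m)) k) *
          monomial (Finsupp.equivFunOnFinite.symm (fun p : Lex (Fin n × Fin m) => B (ofLex p).1 (ofLex p).2)) 1) *
        monomial (Finsupp.equivFunOnFinite.symm (fun j => ∑ i, B i j)) 1 := by
  rw [monomial_symm_eq, monomial_symm_eq]
  simp only [mul_pow, Finset.prod_mul_distrib, ← C_pow, ← map_prod, map_mul]
  rw [show (∏ j : Lex (Fin n × Fin m), (X j : MvPolynomial _ k) ^ B (ofLex j).1 (ofLex j).2)
      = ∏ p : Fin n × Fin m, X (toLex p) ^ B p.1 p.2 from rfl, Fintype.prod_prod_type]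
  rw [Finset.prod_comm (s := univ (α := Fin n)) (t := univ (α := Fin m))
    (f := fun x x1 => (X x1 : MvPolynomial (Fin m) (MvPolynomial (Lex (Fin n × Fin m)) k)) ^ B x x1)]
  simp_rw [Finset.prod_pow_eq_pow_sum]
  simp only [map_prod, map_natCast]
  ring

lemma coeff_C_mul_monomial {R σ : Type*} [CommSemiring R] [DecidableEq σ] (c : R) (g d : σ →₀ ℕ) :
    coeff d (C c * monomial g 1) = if g = d then c else 0 := by
  classical
  rw [coeff_C_mul, coeff_monomial]
  split <;> simp

lemma aeval_expand (k : Type) [Field k] (n m : ℕ) (a : Fin n →₀ ℕ) :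
    (MvPolynomial.aeval
      (fun i => ∑ j : Fin m, (MvPolynomial.C (MvPolynomial.X (toLex (i, j))) * MvPolynomial.X j :
        MvPolynomial (Fin m) (MvPolynomial (Lex (Fin n × Fin m)) k))) (monomial a (1:k)))
      = ∑ B ∈ Fintype.piFinset (fun i => piAntidiag univ (a i)),
        ∏ i : Fin n, ((Nat.multinomial univ (B i) : MvPolynomial (Fin m) (MvPolynomial (Lex (Fin n × Fin m)) k)) *
          ∏ j : Fin m, (MvPolynomial.C (MvPolynomial.X (toLex (i, j))) * MvPolynomial.X j) ^ (B i j)) := by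
  rw [aeval_monomial, map_one, one_mul, Finsupp.prod_pow]
  simp_rw [Finset.sum_pow_eq_sum_piAntidiag]
  rw [Finset.prod_univ_sum]

lemma coeff_Pol (k : Type) [Field k] (n m : ℕ) (a : Fin n →₀ ℕ) (κ : Fin m → ℕ)
    (d : Lex (Fin n × Fin m) →₀ ℕ) :
    coeff d (Pol (fun i j => toLex (i, j) : Fin n → Fin m → Lex (Fin n × Fin m))
        (monomial a (1 : k)) κ)
    = if (∀ i, ∑ j, d (toLex (i, j)) = a i) ∧ (∀ j, ∑ i, d (toLex (i, j)) = κ j)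
      then ((∏ i, Nat.multinomial univ (fun j => d (toLex (i, j)))) : k) else 0 := by
  classical
  rw [Pol, aeval_expand]
  simp_rw [term_eq, MvPolynomial.coeff_sum, coeff_C_mul_monomial, apply_ite (coeff d),
    coeff_zero]
  have hcoe : ∀ B : Fin n → Fin m → ℕ,
      coeff d ((∏ i, (Nat.multinomial univ (B i) : MvPolynomial (Lex (Fin n × Fin m)) k)) *
        monomial (Finsupp.equivFunOnFinite.symm (fun p : Lex (Fin n × Fin m) => B (ofLex p).1 (ofLex p).2)) 1)
      = if (fun p : Lex (Fin n × Fin m) => B (ofLex p).1 (ofLex p).2) = ⇑d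
        then ((∏ i, Nat.multinomial univ (B i)) : k) else 0 := by
    intro B
    rw [show (∏ i, (Nat.multinomial univ (B i) : MvPolynomial (Lex (Fin n × Fin m)) k))
        = C ((∏ i, Nat.multinomial univ (B i) : ℕ) : k) from by
          rw [map_natCast (C : k →+* MvPolynomial (Lex (Fin n × Fin m)) k), Nat.cast_prod],
      coeff_C_mul_monomial]
    have hcond : (Finsupp.equivFunOnFinite.symm (fun p : Lex (Fin n × Fin m) => B (ofLex p).1 (ofLex p).2) = d)
        ↔ ((fun p : Lex (Fin n × Fin m) => B (ofLex p).1 (ofLex p).2) = ⇑d) := by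
      constructor
      · intro h; funext p; rw [← h]
        exact (congrFun (Finsupp.equivFunOnFinite.apply_symm_apply (fun p : Lex (Fin n × Fin m) => B (ofLex p).1 (ofLex p).2)) p).symm
      · intro h; rw [h, Finsupp.equivFunOnFinite_symm_coe]
    rw [if_congr hcond rfl rfl, Nat.cast_prod]
  simp only [hcoe]
  set B₀ : Fin n → Fin m → ℕ := fun i j => d (toLex (i, j)) with hB₀
  have key : ∀ B : Fin n → Fin m → ℕ,
      ((fun p : Lex (Fin n × Fin m) => B (ofLex p).1 (ofLex p).2) = ⇑d) ↔ B = B₀ := by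
    intro B
    constructor
    · intro h; funext i j
      have := congrFun h (toLex (i, j))
      simpa using this
    · intro h; subst h; funext p; rfl
  by_cases H : (∀ i, ∑ j, d (toLex (i, j)) = a i) ∧ (∀ j, ∑ i, d (toLex (i, j)) = κ j)
  · rw [if_pos H]
    have hmem : B₀ ∈ Fintype.piFinset (fun i => piAntidiag univ (a i)) := by
      rw [Fintype.mem_piFinset]
      intro i
      rw [mem_piAntidiag]
      exact ⟨H.1 i, fun j _ => mem_univ j⟩
    rw [Finset.sum_eq_single_of_mem B₀ hmem]
    · have houter : Finsupp.equivFunOnFinite.symm (fun j => ∑ i, B₀ i j)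
          = Finsupp.equivFunOnFinite.symm κ := by
        congr 1
        exact funext fun j => H.2 j
      rw [if_pos houter, if_pos ((key B₀).mpr rfl)]
    · intro B _ hBne
      have hinner : (fun p : Lex (Fin n × Fin m) => B (ofLex p).1 (ofLex p).2) ≠ ⇑d :=
        fun h => hBne ((key B).mp h)
      simp [hinner]
  · rw [if_neg H]
    apply Finset.sum_eq_zero
    intro B hB
    split_ifs with h1 h2
    · exfalso
      apply H
      have hBB : B = B₀ := (key B).mp h2
      have hcol : (fun j => ∑ i, B i j) = κ := Finsupp.equivFunOnFinite.symm.injective h1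
      rw [Fintype.mem_piFinset] at hB
      constructor
      · intro i
        have := (mem_piAntidiag.mp (hB i)).1
        rw [← this, hBB]
      · intro j
        have := congrFun hcol j
        rw [← this, hBB]
    · rfl
    · rfl

lemma leadM_spec {k : Type*} {σ : Type*} [CommSemiring k] [LinearOrder σ]
    (f : MvPolynomial σ k) (hf : f ≠ 0) :
    ofLex (leadM f) ∈ f.support ∧ ∀ d ∈ f.support, toLex d ≤ toLex (ofLex (leadM f)) := by
  letI : DecidableEq (Lex (σ →₀ ℕ)) := Classical.decEq _
  have hs : f.support.Nonempty := by
    rw [Finset.nonempty_iff_ne_empty]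
    simpa [Ne, MvPolynomial.support_eq_empty] using hf
  have himg : (f.support.image (toLex : (σ →₀ ℕ) → Lex (σ →₀ ℕ))).Nonempty := hs.image _
  obtain ⟨x, hx⟩ := Finset.max_of_nonempty himg
  have hlead : leadM f = x := by
    rw [leadM, hx]
    rfl
  constructor
  · obtain ⟨d, hd, hdx⟩ := Finset.mem_image.mp (Finset.mem_of_max hx)
    rw [hlead, ← hdx]
    exact hd
  · intro d hd
    have h := Finset.le_max (Finset.mem_image_of_mem (toLex : (σ →₀ ℕ) → Lex (σ →₀ ℕ)) hd)
    rw [hx] at h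
    rw [hlead]
    exact_mod_cast h

lemma sum_adjust {α : Type*} [Fintype α] [DecidableEq α] (f : α → ℕ) (u v : α)
    (huv : u ≠ v) (hv : 0 < f v) :
    ∑ w, (if w = u then f w + 1 else if w = v then f w - 1 else f w) = ∑ w, f w := by
  have key : ∀ h : α → ℕ,
      ∑ w, h w = h u + (h v + ∑ w ∈ (Finset.univ.erase u).erase v, h w) := by
    intro h
    rw [← Finset.add_sum_erase _ h (Finset.mem_univ u)]
    congr 1
    rw [← Finset.add_sum_erase _ h (Finset.mem_erase.mpr ⟨huv.symm, Finset.mem_univ v⟩)]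
  rw [key, key f]
  have h3 : ∑ w ∈ (Finset.univ.erase u).erase v,
      (if w = u then f w + 1 else if w = v then f w - 1 else f w)
      = ∑ w ∈ (Finset.univ.erase u).erase v, f w := by
    refine Finset.sum_congr rfl fun w hw => ?_
    rw [Finset.mem_erase, Finset.mem_erase] at hw
    rw [if_neg hw.2.1, if_neg hw.1]
  rw [h3, if_pos rfl, if_neg huv.symm, if_pos rfl]
  omega

lemma sum_split {N : ℕ} (f : Fin N → ℕ) (i : Fin N) :
    ∑ w, f w = (∑ w ∈ Finset.Iio i, f w) + f i + ∑ w ∈ Finset.Ioi i, f w := by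
  have h1 : (Finset.univ : Finset (Fin N)) = Finset.Iic i ∪ Finset.Ioi i := by
    ext w
    simp [le_or_gt]
  have h2 : Disjoint (Finset.Iic i) (Finset.Ioi i) := by
    rw [Finset.disjoint_left]
    intro w hw hw'
    rw [Finset.mem_Iic] at hw
    rw [Finset.mem_Ioi] at hw'
    exact absurd hw (not_le.mpr hw')
  rw [h1, Finset.sum_union h2, ← Finset.Iio_insert, Finset.sum_insert (by simp)]
  omega

/-- `char k = 0`. Let `M = x₁^{a₁}⋯xₙ^{aₙ}` be a monomial of `k[x₁,…,xₙ]`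
and `κ ∈ ℕᵐ` with `Pol_κ(M) ≠ 0`. Writing the leading monomial of `Pol_κ(M)` (lex order
with `x₁^{(1)} > x₁^{(2)} > ⋯ > x₁^{(m)} > x₂^{(1)} > ⋯ > xₙ^{(m)}`) as
`∏_{i,j} (x_i^{(j)})^{b_{i,j}}`, the exponents satisfy the recursion
`b_{i,j} = min (κ_j − Σ_{l<i} b_{l,j}) (a_i − Σ_{l<j} b_{i,l})`
(the natural subtractions are exact). -/
theorem leadM_pol_exponent_recursion (k : Type) [Field k] [CharZero k] (n m : ℕ)
    (a : Fin n →₀ ℕ) (κ : Fin m → ℕ)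
    (hne : Pol (fun i j => toLex (i, j) : Fin n → Fin m → Lex (Fin n × Fin m))
      (monomial a (1 : k)) κ ≠ 0)
    (b : Lex (Fin n × Fin m) →₀ ℕ)
    (hb : b = ofLex (leadM (Pol (fun i j => toLex (i, j) : Fin n → Fin m → Lex (Fin n × Fin m))
      (monomial a (1 : k)) κ))) :
    ∀ (i : Fin n) (j : Fin m),
      b (toLex (i, j)) =
        min (κ j - ∑ l ∈ Finset.Iio i, b (toLex (l, j)))
          (a i - ∑ l ∈ Finset.Iio j, b (toLex (i, l))) := by
  classical
  intro i j
  set P := Pol (fun i j => toLex (i, j) : Fin n → Fin m → Lex (Fin n × Fin m))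
    (monomial a (1 : k)) κ with hPdef
  have hsupp : ∀ d : Lex (Fin n × Fin m) →₀ ℕ, d ∈ P.support ↔
      ((∀ i', ∑ j', d (toLex (i', j')) = a i') ∧ (∀ j', ∑ i', d (toLex (i', j')) = κ j')) := by
    intro d
    rw [MvPolynomial.mem_support_iff, hPdef, coeff_Pol]
    split_ifs with h
    · refine iff_of_true ?_ h
      have hpos : (0:ℕ) < ∏ i', Nat.multinomial Finset.univ (fun j' => d (toLex (i', j'))) :=
        Finset.prod_pos fun _ _ => Nat.multinomial_pos _ _
      intro h0
      exact hpos.ne' (by exact_mod_cast h0)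
    · exact iff_of_false (by simp) h
  obtain ⟨hbmem, hbmax⟩ := leadM_spec P hne
  rw [← hb] at hbmem hbmax
  obtain ⟨hrow, hcol⟩ := (hsupp b).mp hbmem
  have hcolsplit := sum_split (fun l => b (toLex (l, j))) i
  have hrowsplit := sum_split (fun l => b (toLex (i, l))) j
  rw [hcol j] at hcolsplit
  rw [hrow i] at hrowsplit
  by_contra hgoal
  have hstrict1 : b (toLex (i, j)) + ∑ l ∈ Finset.Iio i, b (toLex (l, j)) < κ j ∧
      b (toLex (i, j)) + ∑ l ∈ Finset.Iio j, b (toLex (i, l)) < a i := by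
    omega
  have hpos1 : 0 < ∑ l ∈ Finset.Ioi i, b (toLex (l, j)) := by omega
  have hpos2 : 0 < ∑ l ∈ Finset.Ioi j, b (toLex (i, l)) := by omega
  obtain ⟨p, hpmem, hppos⟩ : ∃ p ∈ Finset.Ioi i, 0 < b (toLex (p, j)) := by
    by_contra hcon
    push_neg at hcon
    have : ∑ l ∈ Finset.Ioi i, b (toLex (l, j)) = 0 :=
      Finset.sum_eq_zero fun l hl => Nat.le_zero.mp (hcon l hl)
    omega
  obtain ⟨q, hqmem, hqpos⟩ : ∃ q ∈ Finset.Ioi j, 0 < b (toLex (i, q)) := by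
    by_contra hcon
    push_neg at hcon
    have : ∑ l ∈ Finset.Ioi j, b (toLex (i, l)) = 0 :=
      Finset.sum_eq_zero fun l hl => Nat.le_zero.mp (hcon l hl)
    omega
  have hip : i < p := Finset.mem_Ioi.mp hpmem
  have hjq : j < q := Finset.mem_Ioi.mp hqmem
  set g : Lex (Fin n × Fin m) → ℕ := fun r =>
    if r = toLex (i, j) then b r + 1 else if r = toLex (p, q) then b r + 1
    else if r = toLex (i, q) then b r - 1 else if r = toLex (p, j) then b r - 1 else b r with hg
  set D : Lex (Fin n × Fin m) →₀ ℕ := Finsupp.equivFunOnFinite.symm g with hD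
  have hDapp : ∀ r, D r = g r := fun r => congrFun (Finsupp.equivFunOnFinite.apply_symm_apply g) r
  have hpair : ∀ (x u : Fin n) (y v : Fin m),
      (toLex ((x, y) : Fin n × Fin m) = toLex (u, v)) ↔ (x = u ∧ y = v) := by
    intro x u y v
    constructor
    · intro h
      have := toLex.injective h
      exact ⟨congrArg Prod.fst this, congrArg Prod.snd this⟩
    · rintro ⟨rfl, rfl⟩
      rfl
  have hgeval : ∀ (i' : Fin n) (j' : Fin m), g (toLex (i', j')) =
      if i' = i ∧ j' = j then b (toLex (i', j')) + 1
      else if i' = p ∧ j' = q then b (toLex (i', j')) + 1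
      else if i' = i ∧ j' = q then b (toLex (i', j')) - 1
      else if i' = p ∧ j' = j then b (toLex (i', j')) - 1 else b (toLex (i', j')) := by
    intro i' j'
    rw [hg]
    simp only [hpair]
  have hDrow : ∀ i', ∑ j', D (toLex (i', j')) = a i' := by
    intro i'
    simp only [hDapp, hgeval]
    rcases eq_or_ne i' i with h1 | h1
    · rw [h1]
      trans (∑ x : Fin m, if x = j then b (toLex (i, x)) + 1 else if x = q then b (toLex (i, x)) - 1 else b (toLex (i, x)))
      · refine Finset.sum_congr rfl fun x _ => ?_
        by_cases e1 : x = j <;> by_cases e2 : x = q <;>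
          simp [e1, e2, hip.ne]
      · rw [sum_adjust _ j q hjq.ne hqpos]
        exact hrow i
    · rcases eq_or_ne i' p with h2 | h2
      · rw [h2]
        trans (∑ x : Fin m, if x = q then b (toLex (p, x)) + 1 else if x = j then b (toLex (p, x)) - 1 else b (toLex (p, x)))
        · refine Finset.sum_congr rfl fun x _ => ?_
          by_cases e1 : x = q <;> by_cases e2 : x = j <;>
            simp [e1, e2, hip.ne']
        · rw [sum_adjust _ q j hjq.ne' hppos]
          exact hrow p
      · trans (∑ x : Fin m, b (toLex (i', x)))
        · refine Finset.sum_congr rfl fun x _ => ?_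
          simp [h1, h2]
        · exact hrow i'
  have hDcol : ∀ j', ∑ i', D (toLex (i', j')) = κ j' := by
    intro j'
    simp only [hDapp, hgeval]
    rcases eq_or_ne j' j with h1 | h1
    · rw [h1]
      trans (∑ x : Fin n, if x = i then b (toLex (x, j)) + 1 else if x = p then b (toLex (x, j)) - 1 else b (toLex (x, j)))
      · refine Finset.sum_congr rfl fun x _ => ?_
        by_cases e1 : x = i <;> by_cases e2 : x = p <;>
          simp [e1, e2, hjq.ne]
      · rw [sum_adjust _ i p hip.ne hppos]
        exact hcol j
    · rcases eq_or_ne j' q with h2 | h2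
      · rw [h2]
        trans (∑ x : Fin n, if x = p then b (toLex (x, q)) + 1 else if x = i then b (toLex (x, q)) - 1 else b (toLex (x, q)))
        · refine Finset.sum_congr rfl fun x _ => ?_
          by_cases e1 : x = p <;> by_cases e2 : x = i <;>
            simp [e1, e2, hjq.ne']
        · rw [sum_adjust _ p i hip.ne' hqpos]
          exact hcol q
      · trans (∑ x : Fin n, b (toLex (x, j')))
        · refine Finset.sum_congr rfl fun x _ => ?_
          simp [h1, h2]
        · exact hcol j'
  have hDmem : D ∈ P.support := (hsupp D).mpr ⟨hDrow, hDcol⟩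
  have hDle : toLex D ≤ toLex b := hbmax D hDmem
  have hlt : toLex b < toLex D := by
    show Finsupp.Lex (· < ·) (· < ·) b D
    rw [Finsupp.lex_def]
    refine ⟨toLex (i, j), ?_, ?_⟩
    · intro s hs
      have l2 : toLex ((i, j) : Fin n × Fin m) < toLex (p, q) :=
        Prod.Lex.lt_iff.mpr (Or.inl hip)
      have l3 : toLex ((i, j) : Fin n × Fin m) < toLex (i, q) :=
        Prod.Lex.lt_iff.mpr (Or.inr ⟨rfl, hjq⟩)
      have l4 : toLex ((i, j) : Fin n × Fin m) < toLex (p, j) :=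
        Prod.Lex.lt_iff.mpr (Or.inl hip)
      simp only [hDapp, hg]
      rw [if_neg (ne_of_lt hs), if_neg (ne_of_lt (hs.trans l2)),
        if_neg (ne_of_lt (hs.trans l3)), if_neg (ne_of_lt (hs.trans l4))]
    · simp only [hDapp, hg]
      simp
  exact absurd hDle (not_le.mpr hlt)
end

section
/- Assume char(k) = 0. Let M = x_1^{a_1}⋯x_n^{a_n} be a monomial in k[x_1,…,x_n] and k = (k_1,…,k_m) ∈ ℕ^m with Pol_k(M) ≠ 0, and let h = ∏_{i,j} (x_i^{(j)})^{b_{i,j}} be the leading monomial of Pol_k(M) with respect to the lexicographic order with x_1^{(1)} > x_1^{(2)} > … > x_1^{(m)} > x_2^{(1)} > … > x_n^{(m)}. Then the coefficient of h in Pol_k(M) equals ∏_{i=1}^n a_i! / (b_{i,1}!⋯b_{i,m}!), which is a nonzero element of k. -/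
open MvPolynomial

/-- A product of monomials is a monomial. -/
lemma prod_monomial_aux {R σ ι : Type*} [CommSemiring R] (s : Finset ι)
    (d : ι → σ →₀ ℕ) (c : ι → R) :
    ∏ x ∈ s, monomial (d x) (c x) = monomial (∑ x ∈ s, d x) (∏ x ∈ s, c x) := by
  induction s using Finset.cons_induction with
  | empty => simp
  | cons a s ha ih => simp [Finset.prod_cons, Finset.sum_cons, ih, monomial_mul]

lemma single_sum_aux {n m : ℕ} (B : Fin n → Fin m → ℕ) :
    ∑ i, ∑ j, Finsupp.single (toLex (i,j) : Lex (Fin n × Fin m)) (B i j)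
      = Finsupp.equivFunOnFinite.symm fun p => B (ofLex p).1 (ofLex p).2 := by
  ext p
  simp only [Finsupp.coe_finset_sum, Finset.sum_apply, Finsupp.coe_equivFunOnFinite_symm]
  simp only [Finsupp.single_apply,
    show ∀ (x : Fin n) (y : Fin m),
      ((toLex (x,y) : Lex (Fin n × Fin m)) = p) = ((x,y) = ofLex p) from fun _ _ => rfl]
  rw [Finset.sum_eq_single (ofLex p).1, Finset.sum_eq_single (ofLex p).2]
  · simp
  · intro c _ hc
    rw [if_neg fun h => hc (congrArg Prod.snd h)]
  · simp
  · intro c _ hc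
    exact Finset.sum_eq_zero fun j _ => by rw [if_neg fun h => hc (congrArg Prod.fst h)]
  · simp

lemma col_sum_aux {n m : ℕ} (B : Fin n → Fin m → ℕ) :
    ∑ i : Fin n, ∑ j : Fin m, Finsupp.single j (B i j)
      = Finsupp.equivFunOnFinite.symm fun j => ∑ i, B i j := by
  ext j'
  simp [Finsupp.single_apply]

/-- Explicit expansion of the polarization of a monomial: a sum over matrices with
prescribed row sums `a i` and column sums `κ j`, with multinomial coefficients. -/
lemma pol_monomial_eq (k : Type*) [CommSemiring k] (n m : ℕ) (a : Fin n →₀ ℕ) (κ : Fin m → ℕ) :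
    Pol (fun i j => toLex (i, j) : Fin n → Fin m → Lex (Fin n × Fin m)) (monomial a (1:k)) κ
    = ∑ B ∈ Finset.filter (fun B => ∀ j, ∑ i, B i j = κ j)
        (Fintype.piFinset fun i => Finset.piAntidiag Finset.univ (a i)),
        monomial (Finsupp.equivFunOnFinite.symm fun p => B (ofLex p).1 (ofLex p).2)
          ((∏ i, Nat.multinomial Finset.univ (B i) : ℕ) : k) := by
  classical
  unfold Pol
  rw [aeval_monomial, map_one, one_mul]
  rw [Finsupp.prod_pow]
  simp only [Finset.sum_pow_eq_sum_piAntidiag]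
  rw [Finset.prod_univ_sum]
  rw [MvPolynomial.coeff_sum]
  have key : ∀ B : Fin n → Fin m → ℕ,
      (∏ i, ((Nat.multinomial Finset.univ (B i) :
          MvPolynomial (Fin m) (MvPolynomial (Lex (Fin n × Fin m)) k))
        * ∏ j, (C (X (toLex (i,j))) * X j) ^ B i j))
      = monomial (Finsupp.equivFunOnFinite.symm fun j => ∑ i, B i j)
          (monomial (Finsupp.equivFunOnFinite.symm fun p => B (ofLex p).1 (ofLex p).2)
            ((∏ i, Nat.multinomial Finset.univ (B i) : ℕ) : k)) := by
    intro B
    have h1 : ∀ i : Fin n, (∏ j, (C (X (toLex (i,j))) * X j) ^ B i j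
        : MvPolynomial (Fin m) (MvPolynomial (Lex (Fin n × Fin m)) k))
        = monomial (∑ j, Finsupp.single j (B i j))
            (∏ j, (X (toLex (i,j)) : MvPolynomial (Lex (Fin n × Fin m)) k) ^ B i j) := by
      intro i
      rw [← prod_monomial_aux]
      refine Finset.prod_congr rfl fun j _ => ?_
      rw [mul_pow, ← C_pow, C_mul_X_pow_eq_monomial]
    simp only [h1]
    have hcast : ∀ N : ℕ, ((N : MvPolynomial (Fin m) (MvPolynomial (Lex (Fin n × Fin m)) k)))
        = C (N : MvPolynomial (Lex (Fin n × Fin m)) k) := fun N => (map_natCast C N).symm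
    simp only [hcast, C_mul_monomial]
    rw [prod_monomial_aux, col_sum_aux]
    congr 1
    rw [Finset.prod_mul_distrib, ← Nat.cast_prod]
    have h2 : ∀ i : Fin n, (∏ j, (X (toLex (i,j)) : MvPolynomial (Lex (Fin n × Fin m)) k) ^ B i j)
        = monomial (∑ j, Finsupp.single (toLex (i,j) : Lex (Fin n × Fin m)) (B i j)) (1:k) := by
      intro i
      simp only [X_pow_eq_monomial]
      rw [prod_monomial_aux, Finset.prod_const_one]
    simp only [h2]
    rw [prod_monomial_aux, Finset.prod_const_one, single_sum_aux,
      show ((∏ i, Nat.multinomial Finset.univ (B i) : ℕ) : MvPolynomial (Lex (Fin n × Fin m)) k)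
        = C ((∏ i, Nat.multinomial Finset.univ (B i) : ℕ) : k) from (map_natCast C _).symm,
      C_mul_monomial, mul_one]
  simp only [key, MvPolynomial.coeff_monomial]
  rw [Finset.sum_filter]
  refine Finset.sum_congr rfl fun B hB => ?_
  have : (Finsupp.equivFunOnFinite.symm (fun j => ∑ i, B i j) = Finsupp.equivFunOnFinite.symm κ)
      ↔ ∀ j, ∑ i, B i j = κ j := by
    rw [Equiv.apply_eq_iff_eq, funext_iff]
  rw [if_congr this rfl rfl]

lemma image_inst_aux {α β : Type*} (i1 i2 : DecidableEq β) (f : α → β) (s : Finset α) :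
    @Finset.image α β i1 f s = @Finset.image α β i2 f s := by
  rw [Subsingleton.elim i1 i2]

/-- The leading monomial of a nonzero polynomial is in its support. -/
lemma ofLex_leadM_mem_support {k σ : Type*} [CommSemiring k] [LinearOrder σ]
    {f : MvPolynomial σ k} (hf : f ≠ 0) : ofLex (leadM f) ∈ f.support := by
  unfold leadM
  rw [image_inst_aux _ inferInstance]
  set s := f.support.image (toLex : (σ →₀ ℕ) → Lex (σ →₀ ℕ)) with hs
  have hne : s.Nonempty := (support_nonempty.mpr hf).image _
  obtain ⟨x, hx⟩ := Finset.max_of_nonempty hne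
  rw [hx]
  have hxm : x ∈ s := Finset.mem_of_max hx
  rw [hs, Finset.mem_image] at hxm
  obtain ⟨y, hy, rfl⟩ := hxm
  exact hy

/-- `char k = 0`. Let `M = x₁^{a₁}⋯xₙ^{aₙ}` be a monomial of `k[x₁,…,xₙ]`
and `κ ∈ ℕᵐ` with `Pol_κ(M) ≠ 0`, and let `h = ∏_{i,j} (x_i^{(j)})^{b_{i,j}}` be the
leading monomial of `Pol_κ(M)` with respect to the lex order with
`x₁^{(1)} > x₁^{(2)} > ⋯ > x₁^{(m)} > x₂^{(1)} > ⋯ > xₙ^{(m)}`. Then the coefficient of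
`h` in `Pol_κ(M)` equals `∏_i a_i! / (b_{i,1}!⋯b_{i,m}!)` (the natural divisions are
exact), and this is a nonzero element of `k`. -/
theorem leadM_pol_coeff_eq_multinomial (k : Type) [Field k] [CharZero k] (n m : ℕ)
    (a : Fin n →₀ ℕ) (κ : Fin m → ℕ)
    (hne : Pol (fun i j => toLex (i, j) : Fin n → Fin m → Lex (Fin n × Fin m))
      (monomial a (1 : k)) κ ≠ 0)
    (b : Lex (Fin n × Fin m) →₀ ℕ)
    (hb : b = ofLex (leadM (Pol (fun i j => toLex (i, j) : Fin n → Fin m → Lex (Fin n × Fin m))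
      (monomial a (1 : k)) κ))) :
    MvPolynomial.coeff b
        (Pol (fun i j => toLex (i, j) : Fin n → Fin m → Lex (Fin n × Fin m))
          (monomial a (1 : k)) κ) =
        ((∏ i : Fin n, (a i).factorial / ∏ j : Fin m, (b (toLex (i, j))).factorial : ℕ) : k) ∧
      ((∏ i : Fin n, (a i).factorial / ∏ j : Fin m, (b (toLex (i, j))).factorial : ℕ) : k) ≠ 0 := by
  classical
  have hsup : b ∈ (Pol (fun i j => toLex (i, j) : Fin n → Fin m → Lex (Fin n × Fin m))
      (monomial a (1 : k)) κ).support := hb ▸ ofLex_leadM_mem_support hne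
  have hco : MvPolynomial.coeff b (Pol (fun i j => toLex (i, j) :
      Fin n → Fin m → Lex (Fin n × Fin m)) (monomial a (1 : k)) κ) ≠ 0 :=
    MvPolynomial.mem_support_iff.mp hsup
  set T := Finset.filter (fun B : Fin n → Fin m → ℕ => ∀ j, ∑ i, B i j = κ j)
      (Fintype.piFinset fun i => Finset.piAntidiag Finset.univ (a i)) with hT
  have hrw : MvPolynomial.coeff b (Pol (fun i j => toLex (i, j) :
      Fin n → Fin m → Lex (Fin n × Fin m)) (monomial a (1 : k)) κ)
      = ∑ B ∈ T, if (Finsupp.equivFunOnFinite.symm fun p => B (ofLex p).1 (ofLex p).2) = b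
          then ((∏ i, Nat.multinomial Finset.univ (B i) : ℕ) : k) else 0 := by
    rw [pol_monomial_eq, MvPolynomial.coeff_sum]
    simp only [MvPolynomial.coeff_monomial]
    convert rfl
  obtain ⟨B₀, hB₀T, hFB₀⟩ : ∃ B₀ ∈ T,
      (Finsupp.equivFunOnFinite.symm fun p => B₀ (ofLex p).1 (ofLex p).2) = b := by
    by_contra h
    push_neg at h
    exact hco (hrw.trans (Finset.sum_eq_zero fun B hB => if_neg (h B hB)))
  have hbval : ∀ i j, b (toLex (i,j)) = B₀ i j := by
    intro i j
    rw [← hFB₀]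
    rfl
  have hrowsum : ∀ i, ∑ j, B₀ i j = a i := by
    intro i
    have h1 := (Finset.mem_filter.mp hB₀T).1
    rw [Fintype.mem_piFinset] at h1
    have h2 := h1 i
    rw [Finset.mem_piAntidiag] at h2
    exact h2.1
  have hnat : ∀ i, Nat.multinomial Finset.univ (B₀ i)
      = (a i).factorial / ∏ j, (b (toLex (i,j))).factorial := by
    intro i
    unfold Nat.multinomial
    rw [hrowsum i]
    congr 1
    exact Finset.prod_congr rfl fun j _ => by rw [hbval]
  have hprod : ∏ i, Nat.multinomial Finset.univ (B₀ i)
      = ∏ i, (a i).factorial / ∏ j, (b (toLex (i,j))).factorial :=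
    Finset.prod_congr rfl fun i _ => hnat i
  have hcoeff : MvPolynomial.coeff b (Pol (fun i j => toLex (i, j) :
      Fin n → Fin m → Lex (Fin n × Fin m)) (monomial a (1 : k)) κ)
      = ((∏ i, Nat.multinomial Finset.univ (B₀ i) : ℕ) : k) := by
    rw [hrw, Finset.sum_eq_single_of_mem B₀ hB₀T, if_pos hFB₀]
    intro B hB hBne
    rw [if_neg]
    intro hFB
    apply hBne
    funext i j
    have h3 := congrArg (fun F : (Lex (Fin n × Fin m) →₀ ℕ) => F (toLex (i,j)))
      (hFB.trans hFB₀.symm)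
    simpa using h3
  constructor
  · rw [hcoeff, hprod]
  · rw [← hprod, Nat.cast_ne_zero]
    exact (Finset.prod_pos fun i _ => Nat.multinomial_pos _ _).ne'
end
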